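/- Assume the partition setup for R, W, V_1, …, V_s, W_1, …, W_s, U_1, …, U_s, with integers t ≥ 2, k ≥ 3 and k ≤ s ≤ t+k. Let K = 2.4·10^7·(t+k)^5, let m be an even integer with m ≥ 1.728·10^10·(t+k)^9, suppose R contains no cycle of length m, and suppose 2·δ(R) > m + K + 2s. Then V = U_1 ∪ U_2 ∪ ⋯ ∪ U_s. -/

import Mathlib

/-- `G` contains a cycle of length `m`. -/
def HasCycleLen {V : Type*} (G : SimpleGraph V) (m : ℕ) : Prop :=
  ∃ (v : V) (c : G.Walk v v), c.IsCycle ∧ c.length = m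

/-- The subgraph of `R` induced by the finite vertex set `A` is 2-connected:
it has at least 3 vertices, is connected, and remains connected after deleting
any one vertex. -/
def TwoConnectedOn {V : Type*} [DecidableEq V] (R : SimpleGraph V) (A : Finset V) : Prop :=
  3 ≤ A.card ∧ (R.induce (A : Set V)).Connected ∧
    ∀ v ∈ A, (R.induce ((A.erase v : Finset V) : Set V)).Connected

/-- `W_i`: the vertices of `W` having at least `2s` neighbours (in `R`) inside `A`. -/
def bigNbrSet {V : Type*} [DecidableEq V] (R : SimpleGraph V) [DecidableRel R.Adj]
    (s : ℕ) (W A : Finset V) : Finset V :=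
  W.filter fun w => 2 * s ≤ (A.filter fun v => R.Adj w v).card

theorem stmt11 (V : Type*) [Fintype V] [DecidableEq V]
    (R : SimpleGraph V) [DecidableRel R.Adj]
    (s t k : ℕ) (hs : 2 ≤ s) (ht : 2 ≤ t) (hk : 3 ≤ k)
    (hks : k ≤ s) (hstk : s ≤ t + k)
    (W : Finset V) (Vp : Fin s → Finset V)
    (hWcard : W.card ≤ s - 1)
    (hdisjWV : ∀ i, Disjoint W (Vp i))
    (hdisjVV : ∀ i j, i ≠ j → Disjoint (Vp i) (Vp j))
    (hcover : ∀ v : V, v ∈ W ∨ ∃ i, v ∈ Vp i)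
    (hnoedge : ∀ i j, i ≠ j → ∀ x ∈ Vp i, ∀ y ∈ Vp j, ¬ R.Adj x y)
    (h2conn : ∀ i, TwoConnectedOn R (Vp i))
    (m : ℕ) (hmEven : Even m) (hm : 17280000000 * (t + k) ^ 9 ≤ m)
    (hnoCm : ¬ HasCycleLen R m)
    (hdeg : m + 24000000 * (t + k) ^ 5 + 2 * s < 2 * R.minDegree) :
    (Finset.univ : Finset V) =
      Finset.univ.biUnion (fun i => Vp i ∪ bigNbrSet R s W (Vp i)) := by
  apply Finset.ext
  intro v
  simp only [Finset.mem_univ, true_iff, Finset.mem_biUnion]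
  rcases hcover v with hvW | ⟨i, hvi⟩
  · by_contra hcon
    push_neg at hcon
    have hlt : ∀ i : Fin s, ((Vp i).filter fun u => R.Adj v u).card < 2 * s := by
      intro i
      have h1 := hcon i trivial
      rw [Finset.mem_union] at h1
      push_neg at h1
      have h2 := h1.2
      rw [bigNbrSet, Finset.mem_filter] at h2
      push_neg at h2
      exact h2 hvW
    have hsub : R.neighborFinset v ⊆
        W ∪ Finset.univ.biUnion (fun i => (Vp i).filter fun u => R.Adj v u) := by
      intro u hu
      rw [SimpleGraph.mem_neighborFinset] at hu
      rcases hcover u with h | ⟨i, h⟩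
      · exact Finset.mem_union_left _ h
      · exact Finset.mem_union_right _
          (Finset.mem_biUnion.2 ⟨i, Finset.mem_univ _, Finset.mem_filter.2 ⟨h, hu⟩⟩)
    have hdegle : R.degree v ≤ s + s * (2 * s) := by
      rw [← SimpleGraph.card_neighborFinset_eq_degree]
      calc (R.neighborFinset v).card
          ≤ (W ∪ Finset.univ.biUnion (fun i => (Vp i).filter fun u => R.Adj v u)).card :=
            Finset.card_le_card hsub
        _ ≤ W.card + (Finset.univ.biUnion (fun i => (Vp i).filter fun u => R.Adj v u)).card :=
            Finset.card_union_le _ _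
        _ ≤ s + s * (2 * s) := by
            have h1 : W.card ≤ s := le_trans hWcard (Nat.sub_le _ _)
            have h2 : (Finset.univ.biUnion (fun i => (Vp i).filter fun u => R.Adj v u)).card
                ≤ s * (2 * s) := by
              calc _ ≤ ∑ i : Fin s, ((Vp i).filter fun u => R.Adj v u).card :=
                    Finset.card_biUnion_le
                _ ≤ ∑ _i : Fin s, 2 * s :=
                    Finset.sum_le_sum (fun i _ => le_of_lt (hlt i))
                _ = s * (2 * s) := by simp [Finset.sum_const, mul_comm]
            omega
    have hmin : R.minDegree ≤ R.degree v := R.minDegree_le_degree v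
    have hbig : m + 24000000 * (t + k) ^ 5 + 2 * s < 2 * (s + s * (2 * s)) := by omega
    have hssm : s ≤ t + k := hstk
    have htk5 : 5 ≤ t + k := by omega
    have : 2 * (s + s * (2 * s)) ≤ 6 * (t + k) ^ 2 := by nlinarith
    have hbnd : 6 * (t + k) ^ 2 < 17280000000 * (t + k) ^ 9 := by
      have h2 : (t + k) ^ 2 ≤ (t + k) ^ 9 := Nat.pow_le_pow_right (by omega) (by omega)
      nlinarith [pow_pos (show 0 < t + k by omega) 9]
    omega
  · exact ⟨i, trivial, Finset.mem_union_left _ hvi⟩
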